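/- Let γ ≥ 1 and z ∈ ℂ. Then for every x > 0, the power series φ̃(z,x) = 2^{-γ} x^{1/2+γ} Σ_{k=0}^∞ (-z x²/4)^k / (k! · Γ(k+1+γ)) converges absolutely, the function x ↦ φ̃(z,x) satisfies -φ̃''(z,x) + ((γ² - 1/4)/x²) φ̃(z,x) = z φ̃(z,x) on (0,∞), for each fixed x > 0 the map z ↦ φ̃(z,x) is entire and real-valued for real z, and for every b > 0, ∫₀^b |φ̃(z,x)|² dx < ∞. -/

import Mathlib

open MeasureTheory Set

open FormalMultilinearSeries


lemma myNormBound_summable {d : ℕ → ℂ} {Γ0 : ℝ} (hΓ0 : 0 < Γ0)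
    (hd : ∀ k, ‖d k‖ ≤ 1 / (Nat.factorial k * Γ0)) (w : ℂ) :
    Summable (fun k : ℕ => ‖d k * w ^ k‖) := by
  refine Summable.of_nonneg_of_le (fun k => norm_nonneg _) (fun k => ?_)
    ((Real.summable_pow_div_factorial ‖w‖).mul_left (1 / Γ0))
  rw [norm_mul, norm_pow]
  calc ‖d k‖ * ‖w‖ ^ k ≤ 1 / (Nat.factorial k * Γ0) * ‖w‖ ^ k :=
        mul_le_mul_of_nonneg_right (hd k) (by positivity)
    _ = 1 / Γ0 * (‖w‖ ^ k / Nat.factorial k) := by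
        rw [one_div, one_div, mul_inv]; ring

lemma myRadius_top {d : ℕ → ℂ} {Γ0 : ℝ} (hΓ0 : 0 < Γ0)
    (hd : ∀ k, ‖d k‖ ≤ 1 / (Nat.factorial k * Γ0)) :
    (ofScalars ℂ d).radius = ⊤ := by
  refine ENNReal.eq_top_of_forall_nnreal_le fun r =>
    (ofScalars ℂ d).le_radius_of_summable ?_
  refine Summable.of_nonneg_of_le (fun k => by positivity) (fun k => ?_)
    ((Real.summable_pow_div_factorial (r : ℝ)).mul_left (1 / Γ0))
  rw [ofScalars_norm]
  calc ‖d k‖ * (r : ℝ) ^ k ≤ 1 / (Nat.factorial k * Γ0) * (r : ℝ) ^ k :=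
        mul_le_mul_of_nonneg_right (hd k) (by positivity)
    _ = 1 / Γ0 * ((r : ℝ) ^ k / Nat.factorial k) := by
        rw [one_div, one_div, mul_inv]; ring

lemma myHasDerivAt_tsum_pow {d d' : ℕ → ℂ} {Γ0 : ℝ} (hΓ0 : 0 < Γ0)
    (hd : ∀ k, ‖d k‖ ≤ 1 / (Nat.factorial k * Γ0))
    (hrel : ∀ k, d' k = ((k : ℂ) + 1) * d (k + 1)) (w : ℂ) :
    HasDerivAt (fun y : ℂ => ∑' k : ℕ, d k * y ^ k) (∑' k : ℕ, d' k * w ^ k) w := by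
  set p := ofScalars ℂ d with hp
  have hrad : p.radius = ⊤ := myRadius_top hΓ0 hd
  have hball : HasFPowerSeriesOnBall p.sum p 0 ⊤ := by
    have := p.hasFPowerSeriesOnBall (by rw [hrad]; exact ENNReal.zero_lt_top)
    rwa [hrad] at this
  have hfun : (fun y : ℂ => ∑' k : ℕ, d k * y ^ k) = p.sum := by
    funext y
    show (∑' k : ℕ, d k * y ^ k) = ∑' n : ℕ, p n fun _ => y
    exact tsum_congr fun k => by rw [hp, ofScalars_apply_eq, smul_eq_mul]
  have hmem : w ∈ EMetric.ball (0 : ℂ) ⊤ := EMetric.mem_ball.2 (edist_lt_top w 0)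
  have hdiff : DifferentiableAt ℂ p.sum w :=
    hball.differentiableOn.differentiableAt (EMetric.isOpen_ball.mem_nhds hmem)
  rw [hfun]
  suffices hkey : deriv p.sum w = ∑' k : ℕ, d' k * w ^ k by
    rw [← hkey]; exact hdiff.hasDerivAt
  rcases eq_or_ne w 0 with rfl | hw
  · rw [hball.hasFPowerSeriesAt.deriv]
    rw [tsum_eq_single 0 (fun k hk => by rw [zero_pow hk, mul_zero])]
    show (p 1) (fun _ => (1 : ℂ)) = d' 0 * 0 ^ 0
    rw [hp, ofScalars_apply_eq, hrel 0]
    simp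
  · have h3 := ((hball.fderiv.hasSum hmem).mapL (ContinuousLinearMap.apply ℂ ℂ w))
    simp only [ContinuousLinearMap.apply_apply, zero_add] at h3
    have heval : (fderiv ℂ p.sum w) w = deriv p.sum w * w := by
      have h1 : (fderiv ℂ p.sum w) w = w * (fderiv ℂ p.sum w) 1 := by
        rw [← smul_eq_mul, ← ContinuousLinearMap.map_smul, smul_eq_mul, mul_one]
      rw [h1, fderiv_apply_one_eq_deriv]; ring
    rw [heval] at h3
    have h4 : HasSum (fun n : ℕ => d' n * w ^ n * w) (deriv p.sum w * w) := by
      have hfe : (fun n : ℕ => ((p.derivSeries n) fun _ => w) w) =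
          fun n : ℕ => d' n * w ^ n * w := by
        funext n
        rw [p.derivSeries_apply_diag, hp, ofScalars_apply_eq, hrel n]
        push_cast [nsmul_eq_mul, smul_eq_mul]
        ring
      rw [hfe] at h3; exact h3
    have h5 := h4.mul_right w⁻¹
    simp only [mul_assoc, mul_inv_cancel₀ hw, mul_one] at h5
    exact h5.tsum_eq.symm

noncomputable def aCoef (γ : ℝ) (k : ℕ) : ℝ :=
  ((Nat.factorial k : ℝ) * Real.Gamma ((k : ℝ) + 1 + γ))⁻¹

noncomputable def a1Coef (γ : ℝ) (k : ℕ) : ℝ := ((k : ℝ) + 1) * aCoef γ (k + 1)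

noncomputable def a2Coef (γ : ℝ) (k : ℕ) : ℝ := ((k : ℝ) + 1) * a1Coef γ (k + 1)

noncomputable def cCoef (γ : ℝ) (k : ℕ) : ℂ := ((aCoef γ k : ℝ) : ℂ)
noncomputable def c1Coef (γ : ℝ) (k : ℕ) : ℂ := ((a1Coef γ k : ℝ) : ℂ)
noncomputable def c2Coef (γ : ℝ) (k : ℕ) : ℂ := ((a2Coef γ k : ℝ) : ℂ)

section Coeffs
variable {γ : ℝ} (hγ : 1 ≤ γ)
include hγ

lemma gammaArg_pos (k : ℕ) : (0 : ℝ) < (k : ℝ) + 1 + γ := by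
  have := Nat.cast_nonneg (α := ℝ) k; linarith

lemma gamma_pos (k : ℕ) : 0 < Real.Gamma ((k : ℝ) + 1 + γ) :=
  Real.Gamma_pos_of_pos (gammaArg_pos hγ k)

lemma gamma_rec (k : ℕ) :
    Real.Gamma (((k + 1 : ℕ) : ℝ) + 1 + γ) =
      ((k : ℝ) + 1 + γ) * Real.Gamma ((k : ℝ) + 1 + γ) := by
  rw [show ((k + 1 : ℕ) : ℝ) + 1 + γ = ((k : ℝ) + 1 + γ) + 1 by push_cast; ring,
    Real.Gamma_add_one (ne_of_gt (gammaArg_pos hγ k))]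

lemma gamma_mono (k : ℕ) : Real.Gamma (1 + γ) ≤ Real.Gamma ((k : ℝ) + 1 + γ) := by
  induction k with
  | zero => norm_num
  | succ k ih =>
      rw [gamma_rec hγ k]
      refine le_trans ih (le_mul_of_one_le_left (gamma_pos hγ k).le ?_)
      have := Nat.cast_nonneg (α := ℝ) k; linarith

lemma aCoef_pos (k : ℕ) : 0 < aCoef γ k :=
  inv_pos.2 (mul_pos (by positivity) (gamma_pos hγ k))

lemma a1Coef_pos (k : ℕ) : 0 < a1Coef γ k :=
  mul_pos (by positivity) (aCoef_pos hγ (k + 1))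

lemma gamma0_pos : 0 < Real.Gamma (1 + γ) := Real.Gamma_pos_of_pos (by linarith)

lemma aCoef_bound (k : ℕ) : aCoef γ k ≤ 1 / (Nat.factorial k * Real.Gamma (1 + γ)) := by
  rw [aCoef, one_div]
  refine inv_anti₀ (mul_pos (by positivity) (gamma0_pos hγ)) ?_
  exact mul_le_mul_of_nonneg_left (gamma_mono hγ k) (by positivity)

lemma a1Coef_bound (k : ℕ) : a1Coef γ k ≤ 1 / (Nat.factorial k * Real.Gamma (1 + γ)) := by
  have hG := gamma_pos hγ (k + 1)
  have e : a1Coef γ k = ((Nat.factorial k : ℝ) * Real.Gamma (((k + 1 : ℕ) : ℝ) + 1 + γ))⁻¹ := by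
    rw [a1Coef, aCoef, Nat.factorial_succ]
    have h1 : ((k : ℝ) + 1) ≠ 0 := by positivity
    have h2 : (Nat.factorial k : ℝ) ≠ 0 := by positivity
    push_cast
    field_simp
  rw [e, one_div]
  refine inv_anti₀ (mul_pos (by positivity) (gamma0_pos hγ)) ?_
  exact mul_le_mul_of_nonneg_left (gamma_mono hγ (k + 1)) (by positivity)

lemma a2Coef_bound (k : ℕ) : a2Coef γ k ≤ 1 / (Nat.factorial k * Real.Gamma (1 + γ)) := by
  have hG := gamma_pos hγ (k + 2)
  have e : a2Coef γ k = ((Nat.factorial k : ℝ) * Real.Gamma (((k + 2 : ℕ) : ℝ) + 1 + γ))⁻¹ := by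
    rw [a2Coef, a1Coef, aCoef]
    have : k + 1 + 1 = k + 2 := rfl
    rw [this, Nat.factorial_succ (k + 1), Nat.factorial_succ k]
    have h1 : ((k : ℝ) + 1) ≠ 0 := by positivity
    have h2 : ((k : ℝ) + 2) ≠ 0 := by positivity
    have h3 : (Nat.factorial k : ℝ) ≠ 0 := by positivity
    push_cast
    field_simp
  rw [e, one_div]
  refine inv_anti₀ (mul_pos (by positivity) (gamma0_pos hγ)) ?_
  exact mul_le_mul_of_nonneg_left (gamma_mono hγ (k + 2)) (by positivity)

lemma cCoef_bound (k : ℕ) : ‖cCoef γ k‖ ≤ 1 / (Nat.factorial k * Real.Gamma (1 + γ)) := by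
  rw [cCoef, Complex.norm_real, Real.norm_eq_abs, abs_of_pos (aCoef_pos hγ k)]
  exact aCoef_bound hγ k

lemma c1Coef_bound (k : ℕ) : ‖c1Coef γ k‖ ≤ 1 / (Nat.factorial k * Real.Gamma (1 + γ)) := by
  rw [c1Coef, Complex.norm_real, Real.norm_eq_abs, abs_of_pos (a1Coef_pos hγ k)]
  exact a1Coef_bound hγ k

lemma c2Coef_bound (k : ℕ) : ‖c2Coef γ k‖ ≤ 1 / (Nat.factorial k * Real.Gamma (1 + γ)) := by
  rw [c2Coef, Complex.norm_real, Real.norm_eq_abs,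
    abs_of_pos (show 0 < a2Coef γ k by
      rw [a2Coef]; exact mul_pos (by positivity) (a1Coef_pos hγ (k + 1)))]
  exact a2Coef_bound hγ k

end Coeffs

lemma c1Coef_rel (γ : ℝ) (k : ℕ) : c1Coef γ k = ((k : ℂ) + 1) * cCoef γ (k + 1) := by
  rw [c1Coef, cCoef, a1Coef]; push_cast; ring

lemma c2Coef_rel (γ : ℝ) (k : ℕ) : c2Coef γ k = ((k : ℂ) + 1) * c1Coef γ (k + 1) := by
  rw [c2Coef, c1Coef, a2Coef]; push_cast; ring

lemma coef_recurrence {γ : ℝ} (hγ : 1 ≤ γ) (k : ℕ) :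
    ((γ : ℂ) + 1 + (k : ℂ)) * c1Coef γ k = cCoef γ k := by
  have hreal : (γ + 1 + (k : ℝ)) * a1Coef γ k = aCoef γ k := by
    have hG := gamma_pos hγ k
    have hrec := gamma_rec hγ k
    rw [a1Coef, aCoef, aCoef, Nat.factorial_succ, hrec]
    have h1 : ((k : ℝ) + 1) ≠ 0 := by positivity
    have h2 : (Nat.factorial k : ℝ) ≠ 0 := by positivity
    have h3 : ((k : ℝ) + 1 + γ) ≠ 0 := ne_of_gt (gammaArg_pos hγ k)
    push_cast
    field_simp
    ring
  rw [c1Coef, cCoef, ← hreal]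
  push_cast
  ring

/-- The regularized Bessel-type series `φ̃(z,x) = 2^{-γ} x^{1/2+γ}
Σₖ (-z x²/4)^k / (k! Γ(k+1+γ))`. -/
noncomputable def phiTilde (γ : ℝ) (z : ℂ) (x : ℝ) : ℂ :=
  (((2 : ℝ) ^ (-γ) * x ^ ((1 : ℝ) / 2 + γ) : ℝ) : ℂ) *
    ∑' k : ℕ, (-z * (x : ℂ) ^ 2 / 4) ^ k /
      ((Nat.factorial k : ℂ) * ((Real.Gamma ((k : ℝ) + 1 + γ) : ℝ) : ℂ))

noncomputable def Fser (γ : ℝ) : ℂ → ℂ := fun w => ∑' k : ℕ, cCoef γ k * w ^ k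
noncomputable def F1ser (γ : ℝ) : ℂ → ℂ := fun w => ∑' k : ℕ, c1Coef γ k * w ^ k
noncomputable def F2ser (γ : ℝ) : ℂ → ℂ := fun w => ∑' k : ℕ, c2Coef γ k * w ^ k

section F
variable {γ : ℝ} (hγ : 1 ≤ γ)
include hγ

lemma hasSum_Fser (w : ℂ) : HasSum (fun k : ℕ => cCoef γ k * w ^ k) (Fser γ w) :=
  ((myNormBound_summable (gamma0_pos hγ) (cCoef_bound hγ) w).of_norm).hasSum

lemma hasSum_F1ser (w : ℂ) : HasSum (fun k : ℕ => c1Coef γ k * w ^ k) (F1ser γ w) :=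
  ((myNormBound_summable (gamma0_pos hγ) (c1Coef_bound hγ) w).of_norm).hasSum

lemma hasSum_F2ser (w : ℂ) : HasSum (fun k : ℕ => c2Coef γ k * w ^ k) (F2ser γ w) :=
  ((myNormBound_summable (gamma0_pos hγ) (c2Coef_bound hγ) w).of_norm).hasSum

lemma hasDerivAt_Fser (w : ℂ) : HasDerivAt (Fser γ) (F1ser γ w) w :=
  myHasDerivAt_tsum_pow (gamma0_pos hγ) (cCoef_bound hγ) (c1Coef_rel γ) w

lemma hasDerivAt_F1ser (w : ℂ) : HasDerivAt (F1ser γ) (F2ser γ w) w :=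
  myHasDerivAt_tsum_pow (gamma0_pos hγ) (c1Coef_bound hγ) (c2Coef_rel γ) w

lemma Fser_identity (w : ℂ) :
    ((γ : ℂ) + 1) * F1ser γ w + w * F2ser γ w = Fser γ w := by
  have hs1 := hasSum_F1ser hγ w
  have hs2 := hasSum_F2ser hγ w
  have hsF := hasSum_Fser hγ w
  set b : ℕ → ℂ := fun m => (m : ℂ) * c1Coef γ m * w ^ m with hb
  have h2' : HasSum (fun k : ℕ => b (k + 1)) (F2ser γ w * w) := by
    have := hs2.mul_right w
    have hfe : (fun i : ℕ => c2Coef γ i * w ^ i * w) = fun k : ℕ => b (k + 1) := by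
      funext k
      rw [hb]
      simp only [c2Coef_rel γ k]
      push_cast
      ring
    rw [hfe] at this; exact this
  have h3 : HasSum b (F2ser γ w * w) := by
    have := (hasSum_nat_add_iff (f := b) 1).mp h2'
    simpa [hb] using this
  have h4 := (hs1.mul_left ((γ : ℂ) + 1)).add h3
  have h5 : (fun k : ℕ => ((γ : ℂ) + 1) * (c1Coef γ k * w ^ k) + b k) =
      fun k : ℕ => cCoef γ k * w ^ k := by
    funext k
    rw [hb]
    calc ((γ : ℂ) + 1) * (c1Coef γ k * w ^ k) + (k : ℂ) * c1Coef γ k * w ^ k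
        = (((γ : ℂ) + 1 + (k : ℂ)) * c1Coef γ k) * w ^ k := by ring
      _ = cCoef γ k * w ^ k := by rw [coef_recurrence hγ k]
  rw [h5] at h4
  have := h4.unique hsF
  rw [← this]
  ring

end F

lemma phiTilde_eq (γ : ℝ) (w : ℂ) (x : ℝ) :
    phiTilde γ w x = (((2 : ℝ) ^ (-γ) * x ^ ((1 : ℝ) / 2 + γ) : ℝ) : ℂ) *
      Fser γ (-w * (x : ℂ) ^ 2 / 4) := by
  rw [phiTilde, Fser]
  congr 1
  refine tsum_congr fun k => ?_
  rw [cCoef, aCoef]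
  push_cast
  rw [div_eq_mul_inv, mul_comm]


lemma hasDerivAt_phiTilde {γ : ℝ} (hγ : 1 ≤ γ) (z : ℂ) {x : ℝ} (hx : 0 < x) :
    HasDerivAt (phiTilde γ z)
      ((((2 : ℝ) ^ (-γ) * ((1 / 2 + γ) * x ^ ((1 : ℝ) / 2 + γ - 1)) : ℝ) : ℂ) *
          Fser γ (-z * (x : ℂ) ^ 2 / 4) +
        (((2 : ℝ) ^ (-γ) * x ^ ((1 : ℝ) / 2 + γ) : ℝ) : ℂ) *
          (F1ser γ (-z * (x : ℂ) ^ 2 / 4) * (-z * (x : ℂ) / 2))) x := by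
  have hrw : phiTilde γ z = fun y : ℝ =>
      (((2 : ℝ) ^ (-γ) * y ^ ((1 : ℝ) / 2 + γ) : ℝ) : ℂ) * Fser γ (-z * (y : ℂ) ^ 2 / 4) :=
    funext fun y => phiTilde_eq γ z y
  rw [hrw]
  have hA : HasDerivAt (fun y : ℝ => (((2 : ℝ) ^ (-γ) * y ^ ((1 : ℝ) / 2 + γ) : ℝ) : ℂ))
      (((2 : ℝ) ^ (-γ) * ((1 / 2 + γ) * x ^ ((1 : ℝ) / 2 + γ - 1)) : ℝ) : ℂ) x :=
    ((Real.hasDerivAt_rpow_const (Or.inl hx.ne')).const_mul ((2 : ℝ) ^ (-γ))).ofReal_comp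
  have hu : HasDerivAt (fun y : ℝ => -z * (y : ℂ) ^ 2 / 4) (-z * (x : ℂ) / 2) x := by
    have h0 : HasDerivAt (fun y : ℂ => -z * y ^ 2 / 4)
        ((-z * (2 * ((x : ℝ) : ℂ) ^ 1)) / 4) ((x : ℝ) : ℂ) :=
      ((hasDerivAt_pow 2 ((x : ℝ) : ℂ)).const_mul (-z)).div_const 4
    have h1 := h0.comp_ofReal
    convert h1 using 1
    push_cast; ring
  have hB : HasDerivAt (fun y : ℝ => Fser γ (-z * (y : ℂ) ^ 2 / 4))
      (F1ser γ (-z * (x : ℂ) ^ 2 / 4) * (-z * (x : ℂ) / 2)) x :=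
    (hasDerivAt_Fser hγ _).comp x hu
  exact hA.mul hB

lemma hasDerivAt_g1 {γ : ℝ} (hγ : 1 ≤ γ) (z : ℂ) {x : ℝ} (hx : 0 < x) :
    HasDerivAt (fun y : ℝ =>
      (((2 : ℝ) ^ (-γ) * ((1 / 2 + γ) * y ^ ((1 : ℝ) / 2 + γ - 1)) : ℝ) : ℂ) *
          Fser γ (-z * (y : ℂ) ^ 2 / 4) +
        (((2 : ℝ) ^ (-γ) * y ^ ((1 : ℝ) / 2 + γ) : ℝ) : ℂ) *
          (F1ser γ (-z * (y : ℂ) ^ 2 / 4) * (-z * (y : ℂ) / 2)))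
      ((((2 : ℝ) ^ (-γ) * ((1 / 2 + γ) * ((1 / 2 + γ - 1) * x ^ ((1 : ℝ) / 2 + γ - 1 - 1))) : ℝ) : ℂ) *
          Fser γ (-z * (x : ℂ) ^ 2 / 4) +
        (((2 : ℝ) ^ (-γ) * ((1 / 2 + γ) * x ^ ((1 : ℝ) / 2 + γ - 1)) : ℝ) : ℂ) *
          (F1ser γ (-z * (x : ℂ) ^ 2 / 4) * (-z * (x : ℂ) / 2)) +
        ((((2 : ℝ) ^ (-γ) * ((1 / 2 + γ) * x ^ ((1 : ℝ) / 2 + γ - 1)) : ℝ) : ℂ) *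
            (F1ser γ (-z * (x : ℂ) ^ 2 / 4) * (-z * (x : ℂ) / 2)) +
          (((2 : ℝ) ^ (-γ) * x ^ ((1 : ℝ) / 2 + γ) : ℝ) : ℂ) *
            ((F2ser γ (-z * (x : ℂ) ^ 2 / 4) * (-z * (x : ℂ) / 2)) * (-z * (x : ℂ) / 2) +
              F1ser γ (-z * (x : ℂ) ^ 2 / 4) * (-z / 2)))) x := by
  have hu : HasDerivAt (fun y : ℝ => -z * (y : ℂ) ^ 2 / 4) (-z * (x : ℂ) / 2) x := by
    have h0 : HasDerivAt (fun y : ℂ => -z * y ^ 2 / 4)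
        ((-z * (2 * ((x : ℝ) : ℂ) ^ 1)) / 4) ((x : ℝ) : ℂ) :=
      ((hasDerivAt_pow 2 ((x : ℝ) : ℂ)).const_mul (-z)).div_const 4
    have h1 := h0.comp_ofReal
    convert h1 using 1
    push_cast; ring
  have hA1 : HasDerivAt
      (fun y : ℝ => (((2 : ℝ) ^ (-γ) * ((1 / 2 + γ) * y ^ ((1 : ℝ) / 2 + γ - 1)) : ℝ) : ℂ))
      (((2 : ℝ) ^ (-γ) * ((1 / 2 + γ) * ((1 / 2 + γ - 1) * x ^ ((1 : ℝ) / 2 + γ - 1 - 1))) : ℝ) : ℂ) x :=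
    (((Real.hasDerivAt_rpow_const (Or.inl hx.ne')).const_mul (1 / 2 + γ)).const_mul
      ((2 : ℝ) ^ (-γ))).ofReal_comp
  have hF : HasDerivAt (fun y : ℝ => Fser γ (-z * (y : ℂ) ^ 2 / 4))
      (F1ser γ (-z * (x : ℂ) ^ 2 / 4) * (-z * (x : ℂ) / 2)) x :=
    (hasDerivAt_Fser hγ _).comp x hu
  have hA : HasDerivAt (fun y : ℝ => (((2 : ℝ) ^ (-γ) * y ^ ((1 : ℝ) / 2 + γ) : ℝ) : ℂ))
      (((2 : ℝ) ^ (-γ) * ((1 / 2 + γ) * x ^ ((1 : ℝ) / 2 + γ - 1)) : ℝ) : ℂ) x :=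
    ((Real.hasDerivAt_rpow_const (Or.inl hx.ne')).const_mul ((2 : ℝ) ^ (-γ))).ofReal_comp
  have hF1 : HasDerivAt (fun y : ℝ => F1ser γ (-z * (y : ℂ) ^ 2 / 4))
      (F2ser γ (-z * (x : ℂ) ^ 2 / 4) * (-z * (x : ℂ) / 2)) x :=
    (hasDerivAt_F1ser hγ _).comp x hu
  have hC : HasDerivAt (fun y : ℝ => -z * (y : ℂ) / 2) (-z / 2) x := by
    have h0 : HasDerivAt (fun y : ℂ => -z * y / 2) (-z * 1 / 2) ((x : ℝ) : ℂ) :=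
      ((hasDerivAt_id ((x : ℝ) : ℂ)).const_mul (-z)).div_const 2
    have h1 := h0.comp_ofReal
    convert h1 using 1
    ring
  exact (hA1.mul hF).add (hA.mul (hF1.mul hC))

/-- The series defining `φ̃(z,·)` converges absolutely, `φ̃(z,·)` solves the
Schrödinger equation with potential `(γ²-1/4)/x²` on `(0,∞)`, is entire in `z`,
real-valued for real `z`, and square-integrable near `0`. -/
theorem phiTilde_weyl_solution (γ : ℝ) (hγ : 1 ≤ γ) (z : ℂ) :
    (∀ x : ℝ, 0 < x →
      Summable (fun k : ℕ => ‖(-z * (x : ℂ) ^ 2 / 4) ^ k /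
        ((Nat.factorial k : ℂ) * ((Real.Gamma ((k : ℝ) + 1 + γ) : ℝ) : ℂ))‖)) ∧
    (∀ x : ℝ, 0 < x →
      -deriv (deriv (phiTilde γ z)) x +
        (((γ ^ 2 - 1 / 4) / x ^ 2 : ℝ) : ℂ) * phiTilde γ z x = z * phiTilde γ z x) ∧
    (∀ x : ℝ, 0 < x → Differentiable ℂ (fun w : ℂ => phiTilde γ w x)) ∧
    (∀ x : ℝ, 0 < x → ∀ t : ℝ, (phiTilde γ (t : ℂ) x).im = 0) ∧
    (∀ b : ℝ, 0 < b →
      IntegrableOn (fun x : ℝ => ‖phiTilde γ z x‖ ^ 2) (Ioc 0 b)) := by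
  have hΓ0 := gamma0_pos hγ
  have hterm : ∀ (w : ℂ) (k : ℕ), (w : ℂ) ^ k /
      ((Nat.factorial k : ℂ) * ((Real.Gamma ((k : ℝ) + 1 + γ) : ℝ) : ℂ)) =
      cCoef γ k * w ^ k := by
    intro w k
    rw [cCoef, aCoef]
    push_cast
    rw [div_eq_mul_inv, mul_comm]
  refine ⟨?_, ?_, ?_, ?_, ?_⟩
  · -- summability
    intro x hx
    refine (myNormBound_summable hΓ0 (cCoef_bound hγ) (-z * (x : ℂ) ^ 2 / 4)).congr fun k => ?_
    rw [hterm]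
  · -- the ODE
    intro x hx
    have hx0 : (x : ℂ) ≠ 0 := Complex.ofReal_ne_zero.2 hx.ne'
    have hev : deriv (phiTilde γ z) =ᶠ[nhds x] fun y : ℝ =>
        (((2 : ℝ) ^ (-γ) * ((1 / 2 + γ) * y ^ ((1 : ℝ) / 2 + γ - 1)) : ℝ) : ℂ) *
            Fser γ (-z * (y : ℂ) ^ 2 / 4) +
          (((2 : ℝ) ^ (-γ) * y ^ ((1 : ℝ) / 2 + γ) : ℝ) : ℂ) *
            (F1ser γ (-z * (y : ℂ) ^ 2 / 4) * (-z * (y : ℂ) / 2)) := by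
      filter_upwards [Ioi_mem_nhds hx] with y hy
      exact (hasDerivAt_phiTilde hγ z hy).deriv
    rw [hev.deriv_eq, (hasDerivAt_g1 hγ z hx).deriv, phiTilde_eq]
    have hgen : ∀ a : ℝ, x ^ a = x ^ (a - 1) * x := fun a => by
      rw [Real.rpow_sub hx, Real.rpow_one, div_mul_cancel₀ _ hx.ne']
    have e0 : x ^ ((1 : ℝ) / 2 + γ) = x ^ ((1 : ℝ) / 2 + γ - 1 - 1) * x * x := by
      rw [hgen ((1 : ℝ) / 2 + γ), hgen ((1 : ℝ) / 2 + γ - 1)]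
    have e1 : x ^ ((1 : ℝ) / 2 + γ - 1) = x ^ ((1 : ℝ) / 2 + γ - 1 - 1) * x :=
      hgen ((1 : ℝ) / 2 + γ - 1)
    have eVr : (γ ^ 2 - 1 / 4) / x ^ 2 * ((2 : ℝ) ^ (-γ) * x ^ ((1 : ℝ) / 2 + γ)) =
        (γ ^ 2 - 1 / 4) * ((2 : ℝ) ^ (-γ) * x ^ ((1 : ℝ) / 2 + γ - 1 - 1)) := by
      rw [e0]
      field_simp
    rw [show ∀ P : ℂ, (((γ ^ 2 - 1 / 4) / x ^ 2 : ℝ) : ℂ) *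
        ((((2 : ℝ) ^ (-γ) * x ^ ((1 : ℝ) / 2 + γ) : ℝ) : ℂ) * P) =
        ((((γ ^ 2 - 1 / 4) * ((2 : ℝ) ^ (-γ) * x ^ ((1 : ℝ) / 2 + γ - 1 - 1)) : ℝ) : ℂ)) * P from
      fun P => by rw [← mul_assoc, ← Complex.ofReal_mul, eVr]]
    rw [e0, e1]
    have hid := Fser_identity hγ (-z * (x : ℂ) ^ 2 / 4)
    rw [← hid]
    push_cast
    ring
  · -- entire in z
    intro x hx
    have hrw : (fun w : ℂ => phiTilde γ w x) = fun w : ℂ =>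
        (((2 : ℝ) ^ (-γ) * x ^ ((1 : ℝ) / 2 + γ) : ℝ) : ℂ) * Fser γ (-w * (x : ℂ) ^ 2 / 4) :=
      funext fun w => phiTilde_eq γ w x
    rw [hrw]
    have hFd : Differentiable ℂ (Fser γ) := fun w => (hasDerivAt_Fser hγ w).differentiableAt
    exact ((hFd.comp ((differentiable_id.neg.mul_const ((x : ℂ) ^ 2)).div_const 4)).const_mul _)
  · -- real for real z
    intro x hx t
    refine Complex.conj_eq_iff_im.mp ?_
    rw [phiTilde, map_mul, Complex.conj_ofReal]
    congr 1
    rw [show (starRingEnd ℂ) (∑' k : ℕ, (-(t : ℂ) * (x : ℂ) ^ 2 / 4) ^ k /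
        ((Nat.factorial k : ℂ) * ((Real.Gamma ((k : ℝ) + 1 + γ) : ℝ) : ℂ))) =
        star (∑' k : ℕ, (-(t : ℂ) * (x : ℂ) ^ 2 / 4) ^ k /
        ((Nat.factorial k : ℂ) * ((Real.Gamma ((k : ℝ) + 1 + γ) : ℝ) : ℂ))) from rfl,
      tsum_star]
    refine tsum_congr fun k => ?_
    simp only [star_div₀, star_pow, star_mul', star_neg]
    rw [show ∀ w : ℂ, star w = (starRingEnd ℂ) w from fun _ => rfl]
    simp [Complex.conj_ofReal]
  · -- square integrable near 0
    intro b hb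
    set R0 : ℝ := ‖z‖ * b ^ 2 / 4 with hR0
    have hR0nn : 0 ≤ R0 := by positivity
    set K : ℝ := ∑' k : ℕ, ‖cCoef γ k * ((R0 : ℝ) : ℂ) ^ k‖ with hK
    have hKsum := myNormBound_summable hΓ0 (cCoef_bound hγ) ((R0 : ℝ) : ℂ)
    have hKnn : 0 ≤ K := tsum_nonneg fun k => norm_nonneg _
    have hFbound : ∀ x : ℝ, x ∈ Ioc 0 b → ‖Fser γ (-z * (x : ℂ) ^ 2 / 4)‖ ≤ K := by
      intro x hxm
      have hsum := myNormBound_summable hΓ0 (cCoef_bound hγ) (-z * (x : ℂ) ^ 2 / 4)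
      refine le_trans (norm_tsum_le_tsum_norm hsum) (Summable.tsum_le_tsum (fun k => ?_) hsum hKsum)
      rw [norm_mul, norm_mul, norm_pow, norm_pow]
      refine mul_le_mul_of_nonneg_left (pow_le_pow_left₀ (norm_nonneg _) ?_ k) (norm_nonneg _)
      have h1 : ‖-z * (x : ℂ) ^ 2 / 4‖ = ‖z‖ * x ^ 2 / 4 := by
        rw [norm_div, norm_mul, norm_neg, norm_pow, Complex.norm_real]
        simp [Real.norm_eq_abs, abs_of_pos hxm.1]
      have h2 : ‖((R0 : ℝ) : ℂ)‖ = R0 := by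
        rw [Complex.norm_real, Real.norm_eq_abs, abs_of_nonneg hR0nn]
      rw [h1, h2, hR0]
      have hx2 : x ^ 2 ≤ b ^ 2 := pow_le_pow_left₀ hxm.1.le hxm.2 2
      have hz := norm_nonneg z
      have h3 : ‖z‖ * x ^ 2 ≤ ‖z‖ * b ^ 2 := mul_le_mul_of_nonneg_left hx2 hz
      linarith
    set Kb : ℝ := ((2 : ℝ) ^ (-γ) * b ^ ((1 : ℝ) / 2 + γ) * K) ^ 2 with hKb
    have hbound : ∀ x : ℝ, x ∈ Ioc 0 b → ‖phiTilde γ z x‖ ^ 2 ≤ Kb := by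
      intro x hxm
      rw [phiTilde_eq, hKb]
      have hnorm : ‖(((2 : ℝ) ^ (-γ) * x ^ ((1 : ℝ) / 2 + γ) : ℝ) : ℂ)‖ =
          (2 : ℝ) ^ (-γ) * x ^ ((1 : ℝ) / 2 + γ) := by
        rw [Complex.norm_real, Real.norm_eq_abs, abs_of_pos
          (mul_pos (Real.rpow_pos_of_pos (by norm_num) _) (Real.rpow_pos_of_pos hxm.1 _))]
      have hle : ‖(((2 : ℝ) ^ (-γ) * x ^ ((1 : ℝ) / 2 + γ) : ℝ) : ℂ) *
          Fser γ (-z * (x : ℂ) ^ 2 / 4)‖ ≤ (2 : ℝ) ^ (-γ) * b ^ ((1 : ℝ) / 2 + γ) * K := by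
        rw [norm_mul, hnorm]
        have hxb : x ^ ((1 : ℝ) / 2 + γ) ≤ b ^ ((1 : ℝ) / 2 + γ) :=
          Real.rpow_le_rpow hxm.1.le hxm.2 (by linarith)
        have h2 : (0:ℝ) < (2 : ℝ) ^ (-γ) := Real.rpow_pos_of_pos (by norm_num) _
        have t1 : (2 : ℝ) ^ (-γ) * x ^ ((1 : ℝ) / 2 + γ) ≤
            (2 : ℝ) ^ (-γ) * b ^ ((1 : ℝ) / 2 + γ) := mul_le_mul_of_nonneg_left hxb h2.le
        exact mul_le_mul t1 (hFbound x hxm) (norm_nonneg _)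
          (mul_nonneg h2.le (Real.rpow_nonneg hb.le _))
      have hn : (0:ℝ) ≤ ‖(((2 : ℝ) ^ (-γ) * x ^ ((1 : ℝ) / 2 + γ) : ℝ) : ℂ) *
          Fser γ (-z * (x : ℂ) ^ 2 / 4)‖ := norm_nonneg _
      exact pow_le_pow_left₀ hn hle 2
    have hcont : ContinuousOn (fun x : ℝ => ‖phiTilde γ z x‖ ^ 2) (Ioc 0 b) := by
      have hphic : ContinuousOn (phiTilde γ z) (Ioc 0 b) := fun x hxm =>
        (hasDerivAt_phiTilde hγ z hxm.1).continuousAt.continuousWithinAt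
      exact ((continuous_norm.comp_continuousOn hphic).pow 2)
    refine Integrable.mono' (g := fun _ : ℝ => Kb)
      (integrableOn_const measure_Ioc_lt_top.ne)
      (hcont.aestronglyMeasurable measurableSet_Ioc) ?_
    refine (ae_restrict_iff' measurableSet_Ioc).2 (Filter.Eventually.of_forall fun x hxm => ?_)
    rw [Real.norm_eq_abs, abs_of_nonneg (pow_nonneg (norm_nonneg _) 2)]
    exact hbound x hxm
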